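/- For every automorphism φ of the skeleton category _S𝒜⁰_Sk of finitely generated free left S-acts there exists a twisted automorphism φ₀ of _S𝒜⁰_Sk such that φ and φ₀ are naturally isomorphic as functors. -/

import Mathlib

open CategoryTheory

/-- `f : S × X → S × Y` is a homomorphism of free left `S`-acts, where the action of
`S` on `S × X` is `s • (t, x) = (s * t, x)`. -/
def IsActHom (S : Type) [Monoid S] {X Y : Type} (f : S × X → S × Y) : Prop :=
  ∀ (s : S) (p : S × X), f (s * p.1, p.2) = (s * (f p).1, (f p).2)

/-- The skeleton category `_S𝒜⁰_Sk` of finitely generated free left `S`-acts: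
objects are natural numbers `n`, standing for the free act `Fₙ = S × Fin n`. -/
def SkFree (S : Type) [Monoid S] : Type := ℕ

/-- The category structure on `_S𝒜⁰_Sk`: morphisms `n ⟶ m` are the `S`-equivariant maps
`S × Fin n → S × Fin m`. -/
instance (S : Type) [Monoid S] : Category (SkFree S) where
  Hom n m := {f : S × Fin n → S × Fin m // IsActHom S f}
  id n := ⟨fun p => p, fun _ _ => rfl⟩
  comp f g := ⟨fun p => g.1 (f.1 p), fun s p => by
    show g.1 (f.1 (s * p.1, p.2)) = _; rw [f.2 s p]; exact g.2 s (f.1 p)⟩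

/-- An automorphism of a category `C`: a functor `C ⥤ C` admitting a functor `ψ` with
`φ ⋙ ψ` and `ψ ⋙ φ` equal (not merely isomorphic) to the identity functor. -/
def IsCatAutomorphism {C : Type*} [Category C] (φ : C ⥤ C) : Prop :=
  ∃ ψ : C ⥤ C, φ ⋙ ψ = 𝟭 C ∧ ψ ⋙ φ = 𝟭 C

/-- The object `Fₙ = S × Fin n` of the skeleton category. -/
def toSk (S : Type) [Monoid S] (n : ℕ) : SkFree S := n

/-- The twisted automorphism `φ^σ` associated to a monoid automorphism `σ` of `S`:
it fixes every object `Fₙ` and sends `f : Fₙ ⟶ Fₘ` to `σₘ ∘ f ∘ σₙ⁻¹`, where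
`σₙ : S × Fin n → S × Fin n` is the bijection `(t, i) ↦ (σ t, i)`. -/
def twistFunctor (S : Type) [Monoid S] (σ : S ≃* S) : SkFree S ⥤ SkFree S where
  obj n := n
  map {n m} f :=
    ⟨fun p => ((σ ((f.1 (σ.symm p.1, p.2)).1)), (f.1 (σ.symm p.1, p.2)).2), by
      intro s p
      have h := f.2 (σ.symm s) (σ.symm p.1, p.2)
      show ((σ ((f.1 (σ.symm (s * p.1), p.2)).1)), (f.1 (σ.symm (s * p.1), p.2)).2) = _
      rw [map_mul σ.symm s p.1, h]
      simp [map_mul]⟩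
  map_id n := Subtype.ext (funext fun p => by
    show (σ (σ.symm p.1), p.2) = p
    simp)
  map_comp {n m k} f g := Subtype.ext (funext fun p => by
    show (σ ((g.1 (f.1 (σ.symm p.1, p.2))).1), (g.1 (f.1 (σ.symm p.1, p.2))).2) =
        (σ ((g.1 (σ.symm (σ ((f.1 (σ.symm p.1, p.2)).1)), (f.1 (σ.symm p.1, p.2)).2)).1),
          (g.1 (σ.symm (σ ((f.1 (σ.symm p.1, p.2)).1)), (f.1 (σ.symm p.1, p.2)).2)).2)
    simp)

namespace AutoTwist

variable (S : Type) [Monoid S]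

/-- The unique element of `Fin (toSk S 1)`. -/
def o : Fin (toSk S 1) := (0 : Fin 1)

lemma fin1_eq (x : Fin (toSk S 1)) : x = o S :=
  Fin.ext (Nat.lt_one_iff.mp (x.isLt : x.1 < 1))

/-- The `i`-th coproduct injection `F₁ ⟶ Fₙ`. -/
def mu {n : ℕ} (i : Fin n) : toSk S 1 ⟶ toSk S n :=
  ⟨fun p => (p.1, i), fun _ _ => rfl⟩

/-- Right translation by `s`, as an endomorphism of `F₁`. -/
def rho (s : S) : toSk S 1 ⟶ toSk S 1 :=
  ⟨fun p => (p.1 * s, p.2), fun u p => by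
    show (u * p.1 * s, p.2) = (u * (p.1 * s), p.2); rw [mul_assoc]⟩

/-- The cotuple of a family of maps `F₁ ⟶ Fₘ`. -/
def cot {n m : ℕ} (g : Fin n → (toSk S 1 ⟶ toSk S m)) : toSk S n ⟶ toSk S m :=
  ⟨fun p => (g p.2).1 (p.1, o S), fun s p => (g p.2).2 s (p.1, o S)⟩

lemma hom_ext {n m : ℕ} {f g : toSk S n ⟶ toSk S m}
    (h : ∀ i : Fin n, mu S i ≫ f = mu S i ≫ g) : f = g := by
  apply Subtype.ext; funext p
  have := congrFun (congrArg Subtype.val (h p.2)) (p.1, o S)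
  exact this

lemma mu_cot {n m : ℕ} (g : Fin n → (toSk S 1 ⟶ toSk S m)) (i : Fin n) :
    mu S i ≫ cot S g = g i := by
  apply Subtype.ext; funext p
  obtain ⟨t, x⟩ := p
  rw [fin1_eq S x]; rfl

lemma end_rho (f : toSk S 1 ⟶ toSk S 1) : f = rho S ((f.1 (1, o S)).1) := by
  apply Subtype.ext; funext p
  obtain ⟨t, x⟩ := p
  rw [fin1_eq S x]
  have h := f.2 t (1, o S)
  rw [show t * (1:S) = t from mul_one t] at h
  show f.1 (t, o S) = (t * (f.1 (1, o S)).1, o S)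
  rw [h]
  exact congrArg _ (fin1_eq S _)

lemma rho_comp (s t : S) : rho S s ≫ rho S t = rho S (s * t) := by
  apply Subtype.ext; funext p
  show (p.1 * s * t, p.2) = (p.1 * (s * t), p.2)
  rw [mul_assoc]

lemma rho_inj {s t : S} (h : rho S s = rho S t) : s = t := by
  have h1 : ((1:S) * s, o S) = ((1:S) * t, o S) :=
    congrFun (congrArg Subtype.val h) (1, o S)
  simpa using congrArg Prod.fst h1

lemma mu_comp {n m : ℕ} (f : toSk S n ⟶ toSk S m) (i : Fin n) :
    mu S i ≫ f = rho S ((f.1 (1, i)).1) ≫ mu S ((f.1 (1, i)).2) := by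
  apply Subtype.ext; funext p
  obtain ⟨t, x⟩ := p
  have h := f.2 t (1, i)
  rw [show t * (1:S) = t from mul_one t] at h
  show f.1 (t, i) = (t * (f.1 (1, i)).1, (f.1 (1, i)).2)
  rw [h]

end AutoTwist
namespace AutoTwist

variable (S : Type) [Monoid S]

/-- `Fₙ` is a retract of `Fₘ`. -/
def SplitR (n m : ℕ) : Prop :=
  ∃ f : toSk S n ⟶ toSk S m, ∃ g : toSk S m ⟶ toSk S n, f ≫ g = 𝟙 (toSk S n)

lemma splitR_le {n m : ℕ} (h : SplitR S n m) : n ≤ m := by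
  obtain ⟨f, g, hfg⟩ := h
  have key : Function.Injective (fun i : Fin n => (f.1 (1, i)).2) := by
    intro i i' hii
    have e1 : g.1 (f.1 (1, i)) = (1, i) :=
      congrFun (congrArg Subtype.val hfg) (1, i)
    have e1' : g.1 (f.1 (1, i')) = (1, i') :=
      congrFun (congrArg Subtype.val hfg) (1, i')
    have d1 : g.1 (f.1 (1, i)) = g.1 ((f.1 (1,i)).1 * 1, (f.1 (1,i)).2) := by
      rw [mul_one]
    have d1' : g.1 (f.1 (1, i')) = g.1 ((f.1 (1,i')).1 * 1, (f.1 (1,i')).2) := by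
      rw [mul_one]
    have c1 := g.2 (f.1 (1,i)).1 (1, (f.1 (1,i)).2)
    have c1' := g.2 (f.1 (1,i')).1 (1, (f.1 (1,i')).2)
    have ei : i = (g.1 (1, (f.1 (1,i)).2)).2 := by
      have := e1.symm.trans (d1.trans c1)
      exact congrArg Prod.snd this
    have ei' : i' = (g.1 (1, (f.1 (1,i')).2)).2 := by
      have := e1'.symm.trans (d1'.trans c1')
      exact congrArg Prod.snd this
    rw [ei, ei']
    simp only at hii
    rw [hii]
  simpa using Fintype.card_le_of_injective (β := Fin m) _ key

lemma le_splitR {n m : ℕ} (hn : 1 ≤ n) (h : n ≤ m) : SplitR S n m := by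
  refine ⟨⟨fun p => (p.1, Fin.castLE h p.2), fun _ _ => rfl⟩,
    ⟨fun p => (p.1, if hlt : p.2.val < n then ⟨p.2.val, hlt⟩ else ⟨0, hn⟩),
      fun _ _ => rfl⟩, ?_⟩
  apply Subtype.ext; funext p
  show (p.1, _) = p
  have hlt : ((Fin.castLE h p.2 : Fin m) : ℕ) < n := p.2.isLt
  change (p.1, (if hlt' : ((Fin.castLE h p.2 : Fin m) : ℕ) < n then
    (⟨((Fin.castLE h p.2 : Fin m) : ℕ), hlt'⟩ : Fin n) else ⟨0, hn⟩)) = p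
  rw [dif_pos hlt]
  exact Prod.ext rfl (Fin.ext rfl)

def zero_hom (m : SkFree S) : toSk S 0 ⟶ m :=
  ⟨fun p => (Fin.elim0 (p.2 : Fin 0)), fun _ p => (Fin.elim0 (p.2 : Fin 0))⟩

lemma no_hom_to_zero {n : ℕ} (hn : 1 ≤ n) (f : toSk S n ⟶ toSk S 0) : False :=
  Fin.elim0 ((f.1 (1, ⟨0, hn⟩)).2 : Fin 0)

end AutoTwist
namespace AutoTwist

variable (S : Type) [Monoid S]

/-- The rank of an object of the skeleton category, as a natural number. -/
def rk (n : SkFree S) : ℕ := n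

lemma splitR_map (F : SkFree S ⥤ SkFree S) {n m : ℕ} (h : SplitR S n m) :
    SplitR S (rk S (F.obj (toSk S n))) (rk S (F.obj (toSk S m))) := by
  obtain ⟨f, g, hfg⟩ := h
  exact ⟨F.map f, F.map g, (F.map_comp f g).symm.trans ((congrArg F.map hfg).trans (F.map_id _))⟩

lemma splitR_reflect (F G : SkFree S ⥤ SkFree S)
    (hGF : ∀ k : ℕ, G.obj (toSk S (rk S (F.obj (toSk S k)))) = toSk S k) {a b : ℕ}
    (h : SplitR S (rk S (F.obj (toSk S a))) (rk S (F.obj (toSk S b)))) :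
    SplitR S a b := by
  obtain ⟨f, g, hfg⟩ := h
  refine ⟨eqToHom (hGF a).symm ≫ G.map f ≫ eqToHom (hGF b),
    eqToHom (hGF b).symm ≫ G.map g ≫ eqToHom (hGF a), ?_⟩
  simp only [Category.assoc, eqToHom_trans_assoc, eqToHom_refl, Category.id_comp]
  rw [← Category.assoc (G.map f), ← Functor.map_comp, hfg, CategoryTheory.Functor.map_id,
    Category.id_comp, eqToHom_trans, eqToHom_refl]

lemma mono_ge (g : ℕ → ℕ) (hg1 : ∀ k, 1 ≤ k → 1 ≤ g k)
    (hmono : ∀ a b, 1 ≤ a → 1 ≤ b → (a ≤ b ↔ g a ≤ g b)) :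
    ∀ k, 1 ≤ k → k ≤ g k := by
  intro k
  induction k with
  | zero => intro h; omega
  | succ k ih =>
    intro _
    rcases Nat.eq_zero_or_pos k with hk | hk
    · subst hk; exact hg1 1 le_rfl
    · have hik := ih hk
      have h2 : ¬ (g (k+1) ≤ g k) := fun hle => by
        have := (hmono (k+1) k (by omega) hk).mpr hle; omega
      have h3 : g k ≤ g (k+1) := (hmono k (k+1) hk (by omega)).mp (by omega)
      omega

lemma obj_fix (φ ψ : SkFree S ⥤ SkFree S)
    (h1 : φ ⋙ ψ = 𝟭 (SkFree S)) (h2 : ψ ⋙ φ = 𝟭 (SkFree S)) :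
    ∀ n : ℕ, φ.obj (toSk S n) = toSk S n := by
  have hψφ : ∀ k : ℕ, ψ.obj (toSk S (rk S (φ.obj (toSk S k)))) = toSk S k := fun k =>
    Functor.congr_obj h1 (toSk S k)
  have hφψ : ∀ k : ℕ, φ.obj (toSk S (rk S (ψ.obj (toSk S k)))) = toSk S k := fun k =>
    Functor.congr_obj h2 (toSk S k)
  -- zero is fixed
  have zfix : ∀ (F G : SkFree S ⥤ SkFree S),
      (∀ k : ℕ, F.obj (toSk S (rk S (G.obj (toSk S k)))) = toSk S k) →
      F.obj (toSk S 0) = toSk S 0 := by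
    intro F G hFG
    by_contra hne
    have hk : 1 ≤ rk S (F.obj (toSk S 0)) := by
      have : rk S (F.obj (toSk S 0)) ≠ 0 := fun h => hne h
      omega
    have f0 : toSk S 0 ⟶ toSk S (rk S (G.obj (toSk S 0))) := zero_hom S _
    have f1 : toSk S (rk S (F.obj (toSk S 0))) ⟶ toSk S 0 :=
      F.map f0 ≫ eqToHom (hFG 0)
    exact no_hom_to_zero S hk f1
  have φ0 : φ.obj (toSk S 0) = toSk S 0 := zfix φ ψ hφψ
  have ψ0 : ψ.obj (toSk S 0) = toSk S 0 := zfix ψ φ hψφ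
  -- positivity
  have pos : ∀ (F G : SkFree S ⥤ SkFree S),
      (∀ k : ℕ, G.obj (toSk S (rk S (F.obj (toSk S k)))) = toSk S k) →
      G.obj (toSk S 0) = toSk S 0 →
      ∀ k : ℕ, 1 ≤ k → 1 ≤ rk S (F.obj (toSk S k)) := by
    intro F G hGF hG0 k hk
    by_contra h
    have h0 : rk S (F.obj (toSk S k)) = 0 := by omega
    have h0' : toSk S (rk S (F.obj (toSk S k))) = toSk S 0 := congrArg (toSk S) h0
    have hkk := hGF k
    rw [h0', hG0] at hkk
    have : (0 : ℕ) = k := hkk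
    omega
  have φpos := pos φ ψ hψφ ψ0
  have ψpos := pos ψ φ hφψ φ0
  -- monotonicity
  have mono : ∀ (F G : SkFree S ⥤ SkFree S),
      (∀ k : ℕ, G.obj (toSk S (rk S (F.obj (toSk S k)))) = toSk S k) →
      (∀ k : ℕ, 1 ≤ k → 1 ≤ rk S (F.obj (toSk S k))) →
      ∀ a b : ℕ, 1 ≤ a → 1 ≤ b →
        (a ≤ b ↔ rk S (F.obj (toSk S a)) ≤ rk S (F.obj (toSk S b))) := by
    intro F G hGF hFpos a b ha hb
    constructor
    · intro hab
      exact splitR_le S (splitR_map S F (le_splitR S ha hab))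
    · intro hab
      exact splitR_le S (splitR_reflect S F G hGF (le_splitR S (hFpos a ha) hab))
  have φmono := mono φ ψ hψφ φpos
  have ψmono := mono ψ φ hφψ ψpos
  have φge := mono_ge (fun k => rk S (φ.obj (toSk S k))) φpos φmono
  have ψge := mono_ge (fun k => rk S (ψ.obj (toSk S k))) ψpos ψmono
  intro n
  rcases Nat.eq_zero_or_pos n with hn | hn
  · subst hn; exact φ0
  · have hle1 : n ≤ rk S (φ.obj (toSk S n)) := φge n hn
    have hle2 : rk S (φ.obj (toSk S n)) ≤
        rk S (ψ.obj (toSk S (rk S (φ.obj (toSk S n))))) := ψge _ (φpos n hn)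
    have hψn : rk S (ψ.obj (toSk S (rk S (φ.obj (toSk S n))))) = n :=
      congrArg (rk S) (hψφ n)
    have hfin : rk S (φ.obj (toSk S n)) = n := by omega
    exact congrArg (toSk S) hfin
  
end AutoTwist
namespace AutoTwist

variable (S : Type) [Monoid S]

/-- Conjugating the action of an object-fixing endofunctor to an endomap of hom-sets. -/
def Phi (F : SkFree S ⥤ SkFree S) (hF : ∀ k : ℕ, F.obj (toSk S k) = toSk S k)
    {n m : ℕ} (f : toSk S n ⟶ toSk S m) : toSk S n ⟶ toSk S m :=
  eqToHom (hF n).symm ≫ F.map f ≫ eqToHom (hF m)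

lemma Phi_comp (F : SkFree S ⥤ SkFree S) (hF : ∀ k : ℕ, F.obj (toSk S k) = toSk S k)
    {n m l : ℕ} (f : toSk S n ⟶ toSk S m) (g : toSk S m ⟶ toSk S l) :
    Phi S F hF (f ≫ g) = Phi S F hF f ≫ Phi S F hF g := by
  simp [Phi]

lemma Phi_cancel (F G : SkFree S ⥤ SkFree S)
    (hF : ∀ k : ℕ, F.obj (toSk S k) = toSk S k)
    (hG : ∀ k : ℕ, G.obj (toSk S k) = toSk S k)
    (hc : F ⋙ G = 𝟭 (SkFree S)) {n m : ℕ} (f : toSk S n ⟶ toSk S m) :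
    Phi S G hG (Phi S F hF f) = f := by
  have h := Functor.congr_hom hc f
  simp only [Functor.comp_map] at h
  simp [Phi, eqToHom_map, h]

/-- The map on `S` induced by an object-fixing endofunctor. -/
def sig (F : SkFree S ⥤ SkFree S) (hF : ∀ k : ℕ, F.obj (toSk S k) = toSk S k)
    (s : S) : S :=
  ((Phi S F hF (rho S s)).1 (1, o S)).1

lemma Phi_rho (F : SkFree S ⥤ SkFree S) (hF : ∀ k : ℕ, F.obj (toSk S k) = toSk S k)
    (s : S) : Phi S F hF (rho S s) = rho S (sig S F hF s) :=
  end_rho S _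

lemma mu_twist (σ : S ≃* S) {n m : ℕ} (f : toSk S n ⟶ toSk S m) (i : Fin n) :
    mu S i ≫ (twistFunctor S σ).map f
      = rho S (σ ((f.1 (1, i)).1)) ≫ mu S ((f.1 (1, i)).2) := by
  apply Subtype.ext; funext p; obtain ⟨t, x⟩ := p
  have h := f.2 (σ.symm t) (1, i)
  rw [show σ.symm t * (1:S) = σ.symm t from mul_one _] at h
  show (σ ((f.1 (σ.symm t, i)).1), (f.1 (σ.symm t, i)).2)
      = (t * σ ((f.1 (1, i)).1), (f.1 (1, i)).2)
  rw [h]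
  simp [map_mul]

end AutoTwist

open AutoTwist in
/-- For every automorphism `φ` of the skeleton category `_S𝒜⁰_Sk` there is
a twisted automorphism `φ^σ` such that `φ` and `φ^σ` are naturally isomorphic as functors. -/
theorem automorphism_iso_twisted (S : Type) [Monoid S]
    (φ : SkFree S ⥤ SkFree S) (hφ : IsCatAutomorphism φ) :
    ∃ σ : S ≃* S, Nonempty (φ ≅ twistFunctor S σ) := by
  obtain ⟨ψ, h1, h2⟩ := hφ
  have hφfix := obj_fix S φ ψ h1 h2
  have hψfix := obj_fix S ψ φ h2 h1
  have cancel1 : ∀ {n m : ℕ} (f : toSk S n ⟶ toSk S m),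
      Phi S ψ hψfix (Phi S φ hφfix f) = f := fun f => Phi_cancel S φ ψ hφfix hψfix h1 f
  have cancel2 : ∀ {n m : ℕ} (f : toSk S n ⟶ toSk S m),
      Phi S φ hφfix (Phi S ψ hψfix f) = f := fun f => Phi_cancel S ψ φ hψfix hφfix h2 f
  -- the monoid automorphism
  have left_inv : ∀ s : S, sig S ψ hψfix (sig S φ hφfix s) = s := by
    intro s
    apply rho_inj S
    rw [← Phi_rho, ← Phi_rho, cancel1]
  have right_inv : ∀ s : S, sig S φ hφfix (sig S ψ hψfix s) = s := by
    intro s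
    apply rho_inj S
    rw [← Phi_rho, ← Phi_rho, cancel2]
  have map_mul' : ∀ s t : S,
      sig S φ hφfix (s * t) = sig S φ hφfix s * sig S φ hφfix t := by
    intro s t
    apply rho_inj S
    rw [← Phi_rho, ← rho_comp, ← rho_comp, ← Phi_rho, ← Phi_rho, ← Phi_comp]
  let σ : S ≃* S :=
    { toFun := sig S φ hφfix, invFun := sig S ψ hψfix,
      left_inv := left_inv, right_inv := right_inv, map_mul' := map_mul' }
  -- the components of the natural isomorphism
  let eta : ∀ n : ℕ, (toSk S n ⟶ toSk S n) := fun n =>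
    Phi S φ hφfix (cot S (fun i => Phi S ψ hψfix (mu S i)))
  let theta : ∀ n : ℕ, (toSk S n ⟶ toSk S n) := fun n =>
    cot S (fun i => Phi S φ hφfix (mu S i))
  have hetai : ∀ (n : ℕ) (i : Fin n), Phi S φ hφfix (mu S i) ≫ eta n = mu S i := by
    intro n i
    show Phi S φ hφfix (mu S i) ≫ Phi S φ hφfix _ = mu S i
    rw [← Phi_comp, mu_cot, cancel2]
  have hthetai : ∀ (n : ℕ) (i : Fin n), mu S i ≫ theta n = Phi S φ hφfix (mu S i) :=
    fun n i => mu_cot S _ i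
  have ephi : ∀ {n m : ℕ} (X Y : toSk S n ⟶ toSk S m),
      (∀ i : Fin n, Phi S φ hφfix (mu S i) ≫ X = Phi S φ hφfix (mu S i) ≫ Y) →
      X = Y := by
    intro n m X Y h
    have hXY : Phi S ψ hψfix X = Phi S ψ hψfix Y := by
      apply hom_ext S
      intro i
      have hh := congrArg (Phi S ψ hψfix) (h i)
      rw [Phi_comp, Phi_comp, cancel1] at hh
      exact hh
    calc X = Phi S φ hφfix (Phi S ψ hψfix X) := (cancel2 X).symm
    _ = Phi S φ hφfix (Phi S ψ hψfix Y) := by rw [hXY]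
    _ = Y := cancel2 Y
  have eta_theta : ∀ n : ℕ, eta n ≫ theta n = 𝟙 (toSk S n) := by
    intro n
    apply ephi
    intro i
    rw [← Category.assoc, hetai, hthetai, Category.comp_id]
  have theta_eta : ∀ n : ℕ, theta n ≫ eta n = 𝟙 (toSk S n) := by
    intro n
    apply hom_ext S
    intro i
    rw [← Category.assoc, hthetai, hetai, Category.comp_id]
  have nat : ∀ {n m : ℕ} (f : toSk S n ⟶ toSk S m),
      Phi S φ hφfix f ≫ eta m = eta n ≫ (twistFunctor S σ).map f := by
    intro n m f
    apply ephi
    intro i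
    have L : Phi S φ hφfix (mu S i) ≫ Phi S φ hφfix f ≫ eta m
        = rho S (σ ((f.1 (1, i)).1)) ≫ mu S ((f.1 (1, i)).2) := by
      have hmc : mu S i ≫ f = rho S ((f.1 (1, i)).1) ≫ mu S (n := m) ((f.1 (1, i)).2) :=
        mu_comp S f i
      rw [← Category.assoc, ← Phi_comp, hmc, Phi_comp, Phi_rho,
        Category.assoc, hetai m ((f.1 (1, i)).2)]
      rfl
    have R : Phi S φ hφfix (mu S i) ≫ eta n ≫ (twistFunctor S σ).map f
        = rho S (σ ((f.1 (1, i)).1)) ≫ mu S ((f.1 (1, i)).2) := by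
      exact (Category.assoc _ _ _).symm.trans ((eq_whisker (hetai n i) _).trans (mu_twist S σ f i))
    exact L.trans R.symm
  refine ⟨σ, ⟨NatIso.ofComponents (fun n => ?_) ?_⟩⟩
  · exact
      { hom := eqToHom (hφfix n) ≫ eta n
        inv := theta n ≫ eqToHom (hφfix n).symm
        hom_inv_id := by
          exact (Category.assoc _ _ _).trans ((whisker_eq _ ((Category.assoc _ _ _).symm.trans
            ((eq_whisker (eta_theta n) _).trans (Category.id_comp _)))).trans
            ((eqToHom_trans _ _).trans (eqToHom_refl _ _)))
        inv_hom_id := by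
          exact (Category.assoc _ _ _).trans ((whisker_eq _ ((Category.assoc _ _ _).symm.trans
            ((eq_whisker ((eqToHom_trans _ _).trans (eqToHom_refl _ _)) _).trans
            (Category.id_comp _)))).trans (theta_eta n)) }
  · intro X Y f
    have h := congrArg (fun g => eqToHom (hφfix X) ≫ g) (nat f)
    simp only [Phi, Category.assoc] at h
    refine Eq.trans ?_ (Category.assoc _ _ _).symm
    simp at h
    exact h
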